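/- Let r be an odd prime and q a prime power with gcd(r,q)=1, and let e be the multiplicative order of q modulo r. Then the r-part of Φ_i(q) equals the r-part of q^e - 1 if i = e; equals r if i = e·r^f for some f ≥ 1; and equals 1 otherwise. -/

import Mathlib

open Polynomial

/-- Classification: for `r` prime not dividing `q`, with `e = orderOf (q : ZMod r)`,
`r ∣ Φ_i(q)` iff `i = e * r ^ f` for some `f`. -/
lemma aux_cyclo_dvd_iff (r : ℕ) (hr : r.Prime) (q : ℤ) (hrq : ¬ (r:ℤ) ∣ q)
    (e : ℕ) (he : 0 < e) (hre : ¬ r ∣ e)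
    (hord : orderOf ((q : ZMod r)) = e) (i : ℕ) (hi : 0 < i) :
    (r:ℤ) ∣ (cyclotomic i ℤ).eval q ↔ ∃ f : ℕ, i = e * r ^ f := by
  haveI : Fact r.Prime := ⟨hr⟩
  set k := i.factorization r with hk
  set m := ordCompl[r] i with hm
  have him : i = r ^ k * m := (Nat.ordProj_mul_ordCompl_eq_self i r).symm
  have hrm : ¬ r ∣ m := Nat.not_dvd_ordCompl hr hi.ne'
  have hmz : m ≠ 0 := Nat.ordCompl_pos r hi.ne' |>.ne'
  haveI : NeZero (m : ZMod r) := ⟨by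
    rw [Ne, ZMod.natCast_eq_zero_iff]; exact hrm⟩
  have hcast : (((cyclotomic i ℤ).eval q : ℤ) : ZMod r)
      = (cyclotomic i (ZMod r)).eval ((q : ℤ) : ZMod r) := by
    rw [← map_cyclotomic_int i (ZMod r)]
    exact (eval_intCast_map (Int.castRingHom (ZMod r)) (cyclotomic i ℤ) q).symm
  rw [← ZMod.intCast_zmod_eq_zero_iff_dvd, hcast]
  have : (cyclotomic i (ZMod r)).eval ((q : ℤ) : ZMod r) = 0
      ↔ IsPrimitiveRoot ((q : ℤ) : ZMod r) m := by
    rw [him]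
    exact Polynomial.isRoot_cyclotomic_prime_pow_mul_iff_of_charP
  rw [this]
  constructor
  · intro h
    have := h.eq_orderOf
    rw [hord] at this
    exact ⟨k, by rw [him, this, mul_comm]⟩
  · rintro ⟨f, hf⟩
    have hkey : m = e := by
      have h1 : i.factorization r = f := by
        rw [hf, Nat.factorization_mul he.ne' (pow_ne_zero f hr.pos.ne'),
          hr.factorization_pow]
        simp [Nat.factorization_eq_zero_of_not_dvd hre]
      have h2 : e * r ^ f = r ^ k * m := by rw [← hf, him]
      have hkf : k = f := hk.trans h1
      rw [hkf, mul_comm e _] at h2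
      exact (Nat.eq_of_mul_eq_mul_left (pow_pos hr.pos f) h2).symm
    rw [hkey, ← hord]
    exact IsPrimitiveRoot.orderOf _

theorem r_part_cyclotomic_odd_prime
    (r : ℕ) (hr : r.Prime) (hodd : Odd r)
    (q : ℤ) (p k : ℕ) (hp : p.Prime) (hk : 0 < k) (hq : q = (p : ℤ) ^ k)
    (hcop : Int.gcd (r : ℤ) q = 1)
    (e : ℕ) (he : 0 < e) (hdvd : (r : ℤ) ∣ q ^ e - 1)
    (hmin : ∀ m : ℕ, 0 < m → (r : ℤ) ∣ q ^ m - 1 → e ≤ m) :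
    ∀ i : ℕ, 0 < i →
      ((i = e →
          (r : ℤ) ^ padicValInt r ((Polynomial.cyclotomic i ℤ).eval q) =
            (r : ℤ) ^ padicValInt r (q ^ e - 1)) ∧
       ((∃ f : ℕ, 1 ≤ f ∧ i = e * r ^ f) →
          (r : ℤ) ^ padicValInt r ((Polynomial.cyclotomic i ℤ).eval q) = (r : ℤ)) ∧
       (i ≠ e → (¬ ∃ f : ℕ, 1 ≤ f ∧ i = e * r ^ f) →
          (r : ℤ) ^ padicValInt r ((Polynomial.cyclotomic i ℤ).eval q) = 1)) := by
  haveI : Fact r.Prime := ⟨hr⟩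
  have hrp : Prime (r : ℤ) := Nat.prime_iff_prime_int.mp hr
  have hq2 : (1 : ℤ) < q := by
    rw [hq]; exact one_lt_pow₀ (by exact_mod_cast hp.one_lt) hk.ne'
  have hrq : ¬ (r : ℤ) ∣ q := by
    intro h
    have h2 : (r : ℤ) ∣ ((Int.gcd (r : ℤ) q : ℕ) : ℤ) := Int.dvd_coe_gcd dvd_rfl h
    rw [hcop] at h2
    have := Int.le_of_dvd one_pos h2
    have := hr.one_lt
    omega
  have hu : ((q : ZMod r)) ≠ 0 := by
    rw [Ne, ZMod.intCast_zmod_eq_zero_iff_dvd]; exact hrq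
  have hdvd_iff : ∀ m : ℕ, ((r : ℤ) ∣ q ^ m - 1 ↔ ((q : ZMod r)) ^ m = 1) := by
    intro m
    rw [← ZMod.intCast_zmod_eq_zero_iff_dvd]
    push_cast
    rw [sub_eq_zero]
  have hpow : ((q : ZMod r)) ^ e = 1 := (hdvd_iff e).1 hdvd
  have hfin : IsOfFinOrder ((q : ZMod r)) := isOfFinOrder_iff_pow_eq_one.2 ⟨e, he, hpow⟩
  have hord : orderOf ((q : ZMod r)) = e := by
    refine le_antisymm (Nat.le_of_dvd he (orderOf_dvd_iff_pow_eq_one.2 hpow)) ?_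
    exact hmin _ hfin.orderOf_pos ((hdvd_iff _).2 (pow_orderOf_eq_one _))
  have hre : ¬ r ∣ e := by
    intro hdv
    have h1 : e ∣ r - 1 := hord ▸ orderOf_dvd_iff_pow_eq_one.2 (ZMod.pow_card_sub_one_eq_one hu)
    have h2 := Nat.le_of_dvd (by have := hr.one_lt; omega) h1
    have h3 := Nat.le_of_dvd he hdv
    omega
  have hpos : ∀ d : ℕ, 0 < (Polynomial.cyclotomic d ℤ).eval q := fun d =>
    Polynomial.cyclotomic_pos' d hq2
  have hprod : ∀ n : ℕ, 0 < n →
      q ^ n - 1 = ∏ d ∈ n.divisors, (Polynomial.cyclotomic d ℤ).eval q := by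
    intro n hn
    have h := congrArg (Polynomial.eval q) (Polynomial.prod_cyclotomic_eq_X_pow_sub_one hn ℤ)
    rw [Polynomial.eval_sub, Polynomial.eval_pow, Polynomial.eval_X, Polynomial.eval_one,
      Polynomial.eval_prod] at h
    exact h.symm
  have hcls : ∀ d : ℕ, 0 < d →
      ((r : ℤ) ∣ (Polynomial.cyclotomic d ℤ).eval q ↔ ∃ f : ℕ, d = e * r ^ f) :=
    fun d hd => aux_cyclo_dvd_iff r hr q hrq e he hre hord d hd
  have hval_eq : ∀ z : ℤ, z ≠ 0 →
      emultiplicity ((r : ℤ)) z = ((padicValInt r z : ℕ∞)) := by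
    intro z hz
    rw [padicValInt.of_ne_one_ne_zero hr.ne_one hz]
    exact (Int.finiteMultiplicity_iff.mpr
      ⟨by simpa using hr.ne_one, hz⟩).emultiplicity_eq_multiplicity
  intro i hi
  refine ⟨?_, ?_, ?_⟩
  · rintro rfl
    congr 1
    have hmem : i ∈ i.divisors := Nat.mem_divisors_self i hi.ne'
    have hfac : q ^ i - 1 = (Polynomial.cyclotomic i ℤ).eval q *
        ∏ d ∈ i.divisors.erase i, (Polynomial.cyclotomic d ℤ).eval q := by
      rw [hprod i hi, ← Finset.mul_prod_erase _ _ hmem]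
    have hnd : ¬ (r : ℤ) ∣ ∏ d ∈ i.divisors.erase i, (Polynomial.cyclotomic d ℤ).eval q := by
      intro hdvd'
      obtain ⟨d, hdmem, hdd⟩ := (hrp.dvd_finset_prod_iff _).1 hdvd'
      have hdne : d ≠ i := Finset.ne_of_mem_erase hdmem
      have hdmem' := Finset.mem_of_mem_erase hdmem
      have hdpos := Nat.pos_of_mem_divisors hdmem'
      have hdle := Nat.le_of_dvd hi (Nat.dvd_of_mem_divisors hdmem')
      obtain ⟨g, hg⟩ := (hcls d hdpos).1 hdd
      have : i ≤ d := by
        rw [hg]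
        exact Nat.le_mul_of_pos_right i (pow_pos hr.pos g)
      omega
    rw [hfac, padicValInt.mul (hpos i).ne'
      (Finset.prod_pos (fun d _ => hpos d)).ne',
      padicValInt.eq_zero_of_not_dvd hnd, add_zero]
  · rintro ⟨f, hf1, hfi⟩
    set j := e * r ^ (f - 1) with hj
    have hj_pos : 0 < j := Nat.mul_pos he (pow_pos hr.pos _)
    have hij : i = j * r := by
      rw [hfi, hj, mul_assoc, ← pow_succ, Nat.sub_add_cancel hf1]
    have hsub : j.divisors ⊆ i.divisors :=
      Nat.divisors_subset_of_dvd hi.ne' ⟨r, hij⟩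
    have hjlt : j < i := by
      rw [hij]
      exact lt_mul_of_one_lt_right hj_pos hr.one_lt
    have hsplit : q ^ i - 1 =
        (∏ d ∈ i.divisors \ j.divisors, (Polynomial.cyclotomic d ℤ).eval q) * (q ^ j - 1) := by
      rw [hprod i hi, hprod j hj_pos, ← Finset.prod_sdiff hsub]
    have himem : i ∈ i.divisors \ j.divisors := by
      rw [Finset.mem_sdiff]
      refine ⟨Nat.mem_divisors_self i hi.ne', fun h => ?_⟩
      have := Nat.le_of_dvd hj_pos (Nat.dvd_of_mem_divisors h)
      omega
    have hP : (∏ d ∈ i.divisors \ j.divisors, (Polynomial.cyclotomic d ℤ).eval q) =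
        (Polynomial.cyclotomic i ℤ).eval q *
          ∏ d ∈ (i.divisors \ j.divisors).erase i, (Polynomial.cyclotomic d ℤ).eval q :=
      (Finset.mul_prod_erase _ _ himem).symm
    have hnd : ¬ (r : ℤ) ∣ ∏ d ∈ (i.divisors \ j.divisors).erase i,
        (Polynomial.cyclotomic d ℤ).eval q := by
      intro hdvd'
      obtain ⟨d, hdmem, hdd⟩ := (hrp.dvd_finset_prod_iff _).1 hdvd'
      have hdne : d ≠ i := Finset.ne_of_mem_erase hdmem
      have hdmem' := Finset.mem_of_mem_erase hdmem
      rw [Finset.mem_sdiff] at hdmem'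
      have hdpos := Nat.pos_of_mem_divisors hdmem'.1
      obtain ⟨g, hg⟩ := (hcls d hdpos).1 hdd
      have hgd : r ^ g ∣ r ^ f := by
        have h1 : e * r ^ g ∣ e * r ^ f := by
          rw [← hg, ← hfi]; exact Nat.dvd_of_mem_divisors hdmem'.1
        exact (mul_dvd_mul_iff_left he.ne').1 h1
      have hgf : g ≤ f := (Nat.pow_dvd_pow_iff_le_right hr.one_lt).1 hgd
      have hglt : g ≤ f - 1 := by
        rcases Nat.lt_or_ge g f with h | h
        · omega
        · exact absurd (by rw [hg, hfi, le_antisymm hgf h]) hdne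
      apply hdmem'.2
      refine Nat.mem_divisors.2 ⟨?_, hj_pos.ne'⟩
      rw [hg, hj]
      exact mul_dvd_mul_left e (pow_dvd_pow r hglt)
    have hQj : q ^ j - 1 ≠ 0 := by
      have : (1 : ℤ) < q ^ j := one_lt_pow₀ hq2 hj_pos.ne'
      omega
    have hQi : q ^ i - 1 ≠ 0 := by
      have : (1 : ℤ) < q ^ i := one_lt_pow₀ hq2 hi.ne'
      omega
    have hjd : (r : ℤ) ∣ q ^ j - 1 := by
      refine dvd_trans hdvd ?_
      have h1 := sub_dvd_pow_sub_pow (q ^ e) 1 (r ^ (f - 1))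
      rwa [one_pow, ← pow_mul] at h1
    have hnq : ¬ (r : ℤ) ∣ q ^ j := fun h => hrq (hrp.dvd_of_dvd_pow h)
    have hlte := Int.emultiplicity_pow_sub_pow hr hodd (x := q ^ j) (y := 1)
      (by rwa [← (by ring : q ^ j - 1 = q ^ j - 1)] at hjd) hnq r
    have hij' : (q ^ j) ^ r - 1 ^ r = q ^ i - 1 := by
      rw [one_pow, ← pow_mul, ← hij]
    have hEr : emultiplicity r r = (1 : ℕ∞) :=
      (Nat.finiteMultiplicity_iff.mpr ⟨hr.ne_one, hr.pos⟩).emultiplicity_self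
    rw [hij', hval_eq _ hQi, hval_eq _ hQj, hEr] at hlte
    have h2 : padicValInt r (q ^ i - 1) = padicValInt r (q ^ j - 1) + 1 := by
      exact_mod_cast hlte
    have h1 : padicValInt r (q ^ i - 1) =
        padicValInt r ((Polynomial.cyclotomic i ℤ).eval q) +
          padicValInt r (∏ d ∈ (i.divisors \ j.divisors).erase i,
            (Polynomial.cyclotomic d ℤ).eval q) + padicValInt r (q ^ j - 1) := by
      rw [hsplit, hP, padicValInt.mul (mul_ne_zero (hpos i).ne'
          (Finset.prod_pos (fun d _ => hpos d)).ne') hQj,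
        padicValInt.mul (hpos i).ne' (Finset.prod_pos (fun d _ => hpos d)).ne']
    rw [padicValInt.eq_zero_of_not_dvd hnd] at h1
    have h3 : padicValInt r ((Polynomial.cyclotomic i ℤ).eval q) = 1 := by omega
    rw [h3, pow_one]
  · intro hne hnf
    have hnd : ¬ (r : ℤ) ∣ (Polynomial.cyclotomic i ℤ).eval q := by
      rw [hcls i hi]
      rintro ⟨f, hf⟩
      rcases Nat.eq_zero_or_pos f with h0 | h1
      · exact hne (by rw [hf, h0, pow_zero, mul_one])
      · exact hnf ⟨f, h1, hf⟩
    rw [padicValInt.eq_zero_of_not_dvd hnd, pow_zero]
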